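/- Let f, g be bounded Borel-measurable real functions on a measurable space Z with g strictly positive, bounded above, and bounded away from zero. Let Z_1, ..., Z_k be i.i.d. random variables with law ξ, and let ξ_k denote the empirical measure (1/k)∑δ_{Z_i}. Define α = sup_{z',z''} |f(z')/g(z') − f(z'')/g(z'')| and β = sup_{z',z''} g(z')/g(z''). Then |E[ξ_k(f)/ξ_k(g)] − ξ(f)/ξ(g)| ≤ 2αβ²/k. -/

import Mathlib

open MeasureTheory ProbabilityTheory

private lemma bdd_integrable {β : Type*} [MeasurableSpace β] {μ : Measure β}
    [IsFiniteMeasure μ] {φ : β → ℝ} (hφ : Measurable φ) (M : ℝ)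
    (h : ∀ x, |φ x| ≤ M) : Integrable φ μ :=
  ⟨hφ.aestronglyMeasurable,
    HasFiniteIntegral.of_bounded (C := M) (ae_of_all _ fun x => by simpa using h x)⟩

private lemma bdd_memℒp {β : Type*} [MeasurableSpace β] {μ : Measure β}
    [IsFiniteMeasure μ] {φ : β → ℝ} (hφ : Measurable φ) (M : ℝ)
    (h : ∀ x, |φ x| ≤ M) : MemLp φ 2 μ :=
  MemLp.of_bound hφ.aestronglyMeasurable M (ae_of_all _ fun x => by simpa using h x)

set_option maxHeartbeats 2000000 in
/-- Bias bound for the ratio of empirical integrals (Proposition 2.1, first bound). -/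
theorem stmt_0
    {α Ω : Type*} [MeasurableSpace α] [MeasurableSpace Ω]
    (P : Measure Ω) [IsProbabilityMeasure P]
    (ξ : Measure α) [IsProbabilityMeasure ξ]
    (k : ℕ) (hk : 1 ≤ k)
    (Z : Fin k → Ω → α)
    (hmeas : ∀ i, Measurable (Z i))
    (hindep : iIndepFun Z P)
    (hlaw : ∀ i, P.map (Z i) = ξ)
    (f g : α → ℝ) (hf : Measurable f) (hg : Measurable g)
    (F c C : ℝ) (hF : ∀ z, |f z| ≤ F)
    (hc : 0 < c) (hgc : ∀ z, c ≤ g z) (hgC : ∀ z, g z ≤ C)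
    (a b : ℝ)
    (ha : ∀ z z', |f z / g z - f z' / g z'| ≤ a)
    (hb : ∀ z z', g z / g z' ≤ b) :
    |(∫ ω, ((k : ℝ)⁻¹ * ∑ i, f (Z i ω)) / ((k : ℝ)⁻¹ * ∑ i, g (Z i ω)) ∂P)
      - (∫ z, f z ∂ξ) / (∫ z, g z ∂ξ)| ≤ 2 * a * b ^ 2 / k := by
  classical
  -- basic facts
  have hne : Nonempty α := by
    by_contra hn
    rw [not_nonempty_iff] at hn
    have h1 := measure_univ (μ := ξ)
    rw [Set.univ_eq_empty_iff.mpr hn, measure_empty] at h1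
    exact zero_ne_one h1
  obtain ⟨z₀⟩ := hne
  have hg0 : ∀ z, 0 < g z := fun z => lt_of_lt_of_le hc (hgc z)
  have ha0 : 0 ≤ a := le_trans (abs_nonneg _) (ha z₀ z₀)
  have hb1 : (1 : ℝ) ≤ b := by
    have := hb z₀ z₀
    rwa [div_self (hg0 z₀).ne'] at this
  have hb0 : (0 : ℝ) < b := lt_of_lt_of_le one_pos hb1
  have hk0 : (0 : ℝ) < (k : ℝ) := by exact_mod_cast hk
  have hgb' : ∀ z z', g z ≤ b * g z' := fun z z' => by
    have := hb z z'
    rwa [div_le_iff₀ (hg0 z')] at this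
  have hgabs : ∀ z, |g z| ≤ C := fun z => by
    rw [abs_of_pos (hg0 z)]; exact hgC z
  have hgi : Integrable g ξ := bdd_integrable hg C hgabs
  have hfi : Integrable f ξ := bdd_integrable hf F hF
  set m := ∫ z, g z ∂ξ with hm
  have hmc : c ≤ m := by
    calc c = ∫ _, c ∂ξ := by simp
    _ ≤ m := integral_mono (integrable_const c) hgi hgc
  have hm0 : 0 < m := lt_of_lt_of_le hc hmc
  have hgbm : ∀ z, g z ≤ b * m := fun z => by
    calc g z = ∫ _, g z ∂ξ := by simp
    _ ≤ ∫ z', b * g z' ∂ξ := integral_mono (integrable_const _) (hgi.const_mul b)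
        (fun z' => hgb' z z')
    _ = b * m := integral_const_mul b g
  have hmbg : ∀ z, m ≤ b * g z := fun z => by
    calc m ≤ ∫ _, b * g z ∂ξ := integral_mono hgi (integrable_const _) (fun z' => hgb' z' z)
    _ = b * g z := by simp
  set r := (∫ z, f z ∂ξ) / m with hr
  set h : α → ℝ := fun z => f z - r * g z with hh_def
  have hmeash : Measurable h := hf.sub (measurable_const.mul hg)
  -- |h| ≤ a * g
  have hha : ∀ z, |h z| ≤ a * g z := by
    intro z
    have e1 : f z * m - (∫ z', f z' ∂ξ) * g z = ∫ z', (f z * g z' - f z' * g z) ∂ξ := by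
      rw [integral_sub (hgi.const_mul (f z)) (hfi.mul_const (g z)),
        integral_const_mul, integral_mul_const]
    have hpt : ∀ z', |f z * g z' - f z' * g z| ≤ a * g z * g z' := by
      intro z'
      have e : f z * g z' - f z' * g z = g z * g z' * (f z / g z - f z' / g z') := by
        have h1 := (hg0 z).ne'
        have h2 := (hg0 z').ne'
        field_simp
      rw [e, abs_mul, abs_of_pos (mul_pos (hg0 z) (hg0 z'))]
      calc g z * g z' * |f z / g z - f z' / g z'| ≤ g z * g z' * a :=
        mul_le_mul_of_nonneg_left (ha z z') (mul_pos (hg0 z) (hg0 z')).le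
      _ = a * g z * g z' := by ring
    have habs : |∫ z', (f z * g z' - f z' * g z) ∂ξ| ≤ ∫ z', |f z * g z' - f z' * g z| ∂ξ := by
      simpa [Real.norm_eq_abs] using
        norm_integral_le_integral_norm (μ := ξ) (fun z' => f z * g z' - f z' * g z)
    have key : |f z * m - (∫ z', f z' ∂ξ) * g z| ≤ a * g z * m := by
      rw [e1]
      calc |∫ z', (f z * g z' - f z' * g z) ∂ξ| ≤ ∫ z', |f z * g z' - f z' * g z| ∂ξ := habs
      _ ≤ ∫ z', a * g z * g z' ∂ξ := integral_mono
          ((hgi.const_mul (f z)).sub (hfi.mul_const (g z))).abs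
          (hgi.const_mul _) hpt
      _ = a * g z * m := integral_const_mul _ _
    have e2 : h z * m = f z * m - (∫ z', f z' ∂ξ) * g z := by
      simp only [hh_def, hr]
      field_simp
    have : |h z| * m ≤ a * g z * m := by
      rw [← abs_of_pos hm0, ← abs_mul, e2, abs_of_pos hm0]
      exact key
    exact le_of_mul_le_mul_right this hm0
  have hhbdd : ∀ z, |h z| ≤ a * (b * m) := fun z =>
    le_trans (hha z) (mul_le_mul_of_nonneg_left (hgbm z) ha0)
  have hξh : ∫ z, h z ∂ξ = 0 := by
    simp only [hh_def]
    rw [integral_sub hfi (hgi.const_mul r), integral_const_mul, ← hm, hr,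
      div_mul_cancel₀ _ hm0.ne']
    ring
  -- random variables
  set T : Ω → ℝ := fun ω => (k : ℝ)⁻¹ * ∑ i, g (Z i ω) with hT
  set S : Ω → ℝ := fun ω => (k : ℝ)⁻¹ * ∑ i, h (Z i ω) with hS
  have hTmeas : Measurable T :=
    measurable_const.mul (Finset.measurable_sum _ fun i _ => hg.comp (hmeas i))
  have hSmeas : Measurable S :=
    measurable_const.mul (Finset.measurable_sum _ fun i _ => hmeash.comp (hmeas i))
  have havg_le : ∀ (φ ψ : α → ℝ), (∀ z, φ z ≤ ψ z) → ∀ ω,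
      (k : ℝ)⁻¹ * ∑ i, φ (Z i ω) ≤ (k : ℝ)⁻¹ * ∑ i, ψ (Z i ω) := by
    intro φ ψ hle ω
    exact mul_le_mul_of_nonneg_left (Finset.sum_le_sum fun i _ => hle _) (by positivity)
  have hconst_avg : ∀ (d : ℝ) (ω : Ω), (k : ℝ)⁻¹ * ∑ _i : Fin k, d = d := by
    intro d ω
    rw [Finset.sum_const]
    simp [Finset.card_univ]
    field_simp
  have hTc : ∀ ω, c ≤ T ω := fun ω => by
    have := havg_le (fun _ => c) g hgc ω
    rwa [hconst_avg c ω] at this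
  have hT0 : ∀ ω, 0 < T ω := fun ω => lt_of_lt_of_le hc (hTc ω)
  have hTC : ∀ ω, T ω ≤ C := fun ω => by
    have := havg_le g (fun _ => C) hgC ω
    rwa [hconst_avg C ω] at this
  have hmT : ∀ ω, m ≤ b * T ω := fun ω => by
    have := havg_le (fun _ => m) (fun z => b * g z) hmbg ω
    rw [hconst_avg m ω] at this
    calc m ≤ (k : ℝ)⁻¹ * ∑ i, b * g (Z i ω) := this
    _ = b * T ω := by rw [hT]; rw [← Finset.mul_sum]; ring
  have hSb : ∀ ω, |S ω| ≤ a * T ω := fun ω => by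
    have h1 : |S ω| ≤ (k : ℝ)⁻¹ * ∑ i, |h (Z i ω)| := by
      rw [hS, abs_mul, abs_of_pos (inv_pos.mpr hk0)]
      exact mul_le_mul_of_nonneg_left (Finset.abs_sum_le_sum_abs _ _) (by positivity)
    have h2 := havg_le (fun z => |h z|) (fun z => a * g z) hha ω
    calc |S ω| ≤ (k : ℝ)⁻¹ * ∑ i, a * g (Z i ω) := le_trans h1 h2
    _ = a * T ω := by rw [hT, ← Finset.mul_sum]; ring
  have hSTa : ∀ ω, |S ω / T ω| ≤ a := fun ω => by
    rw [abs_div, abs_of_pos (hT0 ω), div_le_iff₀ (hT0 ω)]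
    exact hSb ω
  have hSC : ∀ ω, |S ω| ≤ a * C := fun ω =>
    le_trans (hSb ω) (mul_le_mul_of_nonneg_left (hTC ω) ha0)
  have hSTbm : ∀ ω, |S ω / T ω| ≤ b / m * |S ω| := fun ω => by
    rw [abs_div, abs_of_pos (hT0 ω), div_le_iff₀ (hT0 ω)]
    have h1 := hmT ω
    have h2 := abs_nonneg (S ω)
    rw [div_mul_eq_mul_div, div_mul_eq_mul_div, le_div_iff₀ hm0]
    nlinarith
  -- integrals of compositions
  have hmap : ∀ (φ : α → ℝ), Measurable φ → ∀ i,
      ∫ ω, φ (Z i ω) ∂P = ∫ z, φ z ∂ξ := by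
    intro φ hφ i
    rw [← hlaw i, integral_map (hmeas i).aemeasurable hφ.aestronglyMeasurable]
  have hcompInt : ∀ (φ : α → ℝ), Measurable φ → ∀ (M : ℝ), (∀ z, |φ z| ≤ M) → ∀ i,
      Integrable (fun ω => φ (Z i ω)) P := fun φ hφ M hM i =>
    bdd_integrable (hφ.comp (hmeas i)) M (fun ω => hM _)
  have hyint : ∀ i, Integrable (fun ω => g (Z i ω)) P := hcompInt g hg C hgabs
  have hxint : ∀ i, Integrable (fun ω => h (Z i ω)) P := hcompInt h hmeash (a * (b * m)) hhbdd
  have hPT : ∫ ω, T ω ∂P = m := by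
    rw [hT]
    simp only
    rw [integral_const_mul, integral_finset_sum _ (fun i _ => hyint i)]
    have : ∀ i : Fin k, ∫ ω, g (Z i ω) ∂P = m := fun i => hmap g hg i
    rw [Finset.sum_congr rfl (fun i _ => this i), Finset.sum_const]
    simp [Finset.card_univ]
    field_simp
  have hPS : ∫ ω, S ω ∂P = 0 := by
    rw [hS]
    simp only
    rw [integral_const_mul, integral_finset_sum _ (fun i _ => hxint i)]
    have : ∀ i : Fin k, ∫ ω, h (Z i ω) ∂P = 0 := fun i => by rw [hmap h hmeash i, hξh]
    rw [Finset.sum_congr rfl (fun i _ => this i), Finset.sum_const]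
    simp
  -- pairwise independence of compositions
  have hpair : ∀ (φ : α → ℝ), Measurable φ →
      Set.Pairwise ↑(Finset.univ : Finset (Fin k))
        (fun i j => IndepFun (fun ω => φ (Z i ω)) (fun ω => φ (Z j ω)) P) := by
    intro φ hφ i _ j _ hij
    exact (hindep.indepFun hij).comp hφ hφ
  -- second moment of g under ξ
  have hsqint : Integrable (fun z => g z ^ 2) ξ := bdd_integrable (hg.pow_const 2) (C ^ 2)
      (fun z => by rw [abs_of_nonneg (sq_nonneg _)]; nlinarith [hg0 z, hgC z])
  have hg2 : ∫ z, g z ^ 2 ∂ξ ≤ b * m ^ 2 := by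
    calc ∫ z, g z ^ 2 ∂ξ ≤ ∫ z, b * m * g z ∂ξ :=
        integral_mono hsqint (hgi.const_mul _) (fun z => by nlinarith [hg0 z, hgbm z])
    _ = b * m ^ 2 := by rw [integral_const_mul, ← hm]; ring
  -- MemLp facts
  have hC0 : 0 < C := lt_of_lt_of_le hc (le_trans (hgc z₀) (hgC z₀))
  have hF0 : 0 ≤ F := le_trans (abs_nonneg _) (hF z₀)
  have hYm : ∀ i, MemLp (fun ω => g (Z i ω)) 2 P := fun i =>
    bdd_memℒp (hg.comp (hmeas i)) C (fun ω => hgabs _)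
  have hXm : ∀ i, MemLp (fun ω => h (Z i ω)) 2 P := fun i =>
    bdd_memℒp (hmeash.comp (hmeas i)) (a * (b * m)) (fun ω => hhbdd _)
  have hTm2 : MemLp T 2 P := bdd_memℒp hTmeas C
    (fun ω => by rw [abs_of_pos (hT0 ω)]; exact hTC ω)
  have hSm2 : MemLp S 2 P := bdd_memℒp hSmeas (a * C) hSC
  -- variance of single terms
  have hVY : ∀ i, variance (fun ω => g (Z i ω)) P ≤ b * m ^ 2 := fun i => by
    have e : P[(fun ω => g (Z i ω)) ^ 2] = ∫ z, g z ^ 2 ∂ξ := by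
      have : P[(fun ω => g (Z i ω)) ^ 2] = ∫ ω, (fun z => g z ^ 2) (Z i ω) ∂P := rfl
      rw [this, hmap (fun z => g z ^ 2) (hg.pow_const 2) i]
    calc variance (fun ω => g (Z i ω)) P ≤ P[(fun ω => g (Z i ω)) ^ 2] :=
        variance_le_expectation_sq (show Measurable fun ω => g (Z i ω) from hg.comp (hmeas i)).aestronglyMeasurable
    _ = ∫ z, g z ^ 2 ∂ξ := e
    _ ≤ b * m ^ 2 := hg2
  have hh2int : Integrable (fun z => h z ^ 2) ξ := bdd_integrable (hmeash.pow_const 2)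
    ((a * (b * m)) ^ 2) (fun z => by
      rw [abs_of_nonneg (sq_nonneg _)]
      nlinarith [hhbdd z, abs_nonneg (h z), sq_abs (h z)])
  have hh2 : ∫ z, h z ^ 2 ∂ξ ≤ a ^ 2 * (b * m ^ 2) := by
    calc ∫ z, h z ^ 2 ∂ξ ≤ ∫ z, a ^ 2 * g z ^ 2 ∂ξ :=
        integral_mono hh2int (hsqint.const_mul _)
          (fun z => by nlinarith [hha z, abs_nonneg (h z), sq_abs (h z), hg0 z])
    _ = a ^ 2 * ∫ z, g z ^ 2 ∂ξ := integral_const_mul _ _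
    _ ≤ a ^ 2 * (b * m ^ 2) := mul_le_mul_of_nonneg_left hg2 (sq_nonneg a)
  have hVX : ∀ i, variance (fun ω => h (Z i ω)) P ≤ a ^ 2 * (b * m ^ 2) := fun i => by
    have e : P[(fun ω => h (Z i ω)) ^ 2] = ∫ z, h z ^ 2 ∂ξ := by
      have : P[(fun ω => h (Z i ω)) ^ 2] = ∫ ω, (fun z => h z ^ 2) (Z i ω) ∂P := rfl
      rw [this, hmap (fun z => h z ^ 2) (hmeash.pow_const 2) i]
    calc variance (fun ω => h (Z i ω)) P ≤ P[(fun ω => h (Z i ω)) ^ 2] :=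
        variance_le_expectation_sq (show Measurable fun ω => h (Z i ω) from hmeash.comp (hmeas i)).aestronglyMeasurable
    _ = ∫ z, h z ^ 2 ∂ξ := e
    _ ≤ a ^ 2 * (b * m ^ 2) := hh2
  -- variance of the empirical averages
  have hcard : ∑ _i : Fin k, (1 : ℝ) = (k : ℝ) := by
    rw [Finset.sum_const]; simp [Finset.card_univ]
  have hVarT : variance T P ≤ b * m ^ 2 / k := by
    have hrep : T = ((k : ℝ)⁻¹) • ∑ i, (fun ω => g (Z i ω)) := by
      funext ω
      simp [hT, Finset.sum_apply, smul_eq_mul]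
    rw [hrep, variance_smul, IndepFun.variance_sum (fun i _ => hYm i) (hpair g hg)]
    calc ((k : ℝ)⁻¹) ^ 2 * ∑ i : Fin k, variance (fun ω => g (Z i ω)) P
        ≤ ((k : ℝ)⁻¹) ^ 2 * ∑ _i : Fin k, (b * m ^ 2) :=
          mul_le_mul_of_nonneg_left (Finset.sum_le_sum fun i _ => hVY i) (by positivity)
    _ = b * m ^ 2 / k := by
        rw [Finset.sum_const]
        simp only [Finset.card_univ, Fintype.card_fin, nsmul_eq_mul]
        field_simp
  have hVarS : variance S P ≤ a ^ 2 * (b * m ^ 2) / k := by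
    have hrep : S = ((k : ℝ)⁻¹) • ∑ i, (fun ω => h (Z i ω)) := by
      funext ω
      simp [hS, Finset.sum_apply, smul_eq_mul]
    rw [hrep, variance_smul, IndepFun.variance_sum (fun i _ => hXm i) (hpair h hmeash)]
    calc ((k : ℝ)⁻¹) ^ 2 * ∑ i : Fin k, variance (fun ω => h (Z i ω)) P
        ≤ ((k : ℝ)⁻¹) ^ 2 * ∑ _i : Fin k, (a ^ 2 * (b * m ^ 2)) :=
          mul_le_mul_of_nonneg_left (Finset.sum_le_sum fun i _ => hVX i) (by positivity)
    _ = a ^ 2 * (b * m ^ 2) / k := by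
        rw [Finset.sum_const]
        simp only [Finset.card_univ, Fintype.card_fin, nsmul_eq_mul]
        field_simp
  -- second moments of T - m and S
  have hintTm : ∫ ω, (T ω - m) ^ 2 ∂P ≤ b * m ^ 2 / k := by
    have e : variance T P = ∫ ω, (T ω - m) ^ 2 ∂P := by
      rw [variance_eq_integral hTmeas.aemeasurable, hPT]
    rw [← e]; exact hVarT
  have hintS2 : ∫ ω, S ω ^ 2 ∂P ≤ a ^ 2 * (b * m ^ 2) / k := by
    have e : variance S P = ∫ ω, S ω ^ 2 ∂P := variance_of_integral_eq_zero hSmeas.aemeasurable hPS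
    rw [← e]; exact hVarS
  -- integrability over P of the various quantities
  have hUmeas : Measurable fun ω => S ω / T ω := hSmeas.div hTmeas
  have hUint : Integrable (fun ω => S ω / T ω) P := bdd_integrable hUmeas a hSTa
  have hSint : Integrable S P := bdd_integrable hSmeas (a * C) hSC
  have hVbdd : ∀ ω, |m - T ω| ≤ m + C := fun ω =>
    abs_le.mpr ⟨by nlinarith [hTC ω], by nlinarith [hT0 ω, hC0]⟩
  have hUVint : Integrable (fun ω => (S ω / T ω) * (m - T ω)) P :=
    bdd_integrable (hUmeas.mul (measurable_const.sub hTmeas)) (a * (m + C))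
      (fun ω => by
        rw [abs_mul]
        exact mul_le_mul (hSTa ω) (hVbdd ω) (abs_nonneg _) ha0)
  have hU2int : Integrable (fun ω => (S ω / T ω) ^ 2) P :=
    bdd_integrable (hUmeas.pow_const 2) (a ^ 2) (fun ω => by
      rw [abs_of_nonneg (sq_nonneg _)]
      nlinarith [hSTa ω, abs_nonneg (S ω / T ω), sq_abs (S ω / T ω)])
  have hV2int : Integrable (fun ω => (T ω - m) ^ 2) P :=
    bdd_integrable ((hTmeas.sub measurable_const).pow_const 2) ((m + C) ^ 2) (fun ω => by
      rw [abs_of_nonneg (sq_nonneg _)]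
      nlinarith [hVbdd ω, abs_nonneg (m - T ω), sq_abs (m - T ω), abs_sub_comm m (T ω)])
  -- bound on the second moment of S/T
  have hintU2 : ∫ ω, (S ω / T ω) ^ 2 ∂P ≤ a ^ 2 * b ^ 3 / k := by
    have hpt : ∀ ω, (S ω / T ω) ^ 2 ≤ (b / m) ^ 2 * S ω ^ 2 := fun ω => by
      have h1 := hSTbm ω
      have h2 := abs_nonneg (S ω / T ω)
      have h3 := abs_nonneg (S ω)
      have h4 : (0 : ℝ) ≤ b / m := div_nonneg hb0.le hm0.le
      nlinarith [sq_abs (S ω / T ω), sq_abs (S ω)]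
    calc ∫ ω, (S ω / T ω) ^ 2 ∂P ≤ ∫ ω, (b / m) ^ 2 * S ω ^ 2 ∂P :=
        integral_mono hU2int (hSm2.integrable_sq.const_mul _) hpt
    _ = (b / m) ^ 2 * ∫ ω, S ω ^ 2 ∂P := integral_const_mul _ _
    _ ≤ (b / m) ^ 2 * (a ^ 2 * (b * m ^ 2) / k) :=
        mul_le_mul_of_nonneg_left hintS2 (sq_nonneg _)
    _ = a ^ 2 * b ^ 3 / k := by
        field_simp
  -- integrability of the ratio of empirical averages
  have hfint : Integrable (fun ω => ((k : ℝ)⁻¹ * ∑ i, f (Z i ω)) / T ω) P := by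
    apply bdd_integrable
      ((measurable_const.mul (Finset.measurable_sum _ fun i _ => hf.comp (hmeas i))).div hTmeas)
      (F / c)
    intro ω
    have hSfb : |(k : ℝ)⁻¹ * ∑ i, f (Z i ω)| ≤ F := by
      rw [abs_mul, abs_of_pos (inv_pos.mpr hk0)]
      calc (k : ℝ)⁻¹ * |∑ i, f (Z i ω)| ≤ (k : ℝ)⁻¹ * ∑ i, |f (Z i ω)| :=
          mul_le_mul_of_nonneg_left (Finset.abs_sum_le_sum_abs _ _) (by positivity)
      _ ≤ (k : ℝ)⁻¹ * ∑ _i : Fin k, F :=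
          mul_le_mul_of_nonneg_left (Finset.sum_le_sum fun i _ => hF _) (by positivity)
      _ = F := hconst_avg F ω
    show |((k : ℝ)⁻¹ * ∑ i, f (Z i ω)) / T ω| ≤ F / c
    rw [abs_div, abs_of_pos (hT0 ω)]
    exact div_le_div₀ hF0 hSfb hc (hTc ω)
  -- rewrite the LHS
  have hLHS : ∫ ω, ((k : ℝ)⁻¹ * ∑ i, f (Z i ω)) / ((k : ℝ)⁻¹ * ∑ i, g (Z i ω)) ∂P - r
      = ∫ ω, S ω / T ω ∂P := by
    show (∫ ω, ((k : ℝ)⁻¹ * ∑ i, f (Z i ω)) / T ω ∂P) - r = ∫ ω, S ω / T ω ∂P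
    have e2 : ∀ ω : Ω, S ω / T ω = ((k : ℝ)⁻¹ * ∑ i, f (Z i ω)) / T ω - r := fun ω => by
      have h1 := (hT0 ω).ne'
      have e : S ω = (k : ℝ)⁻¹ * ∑ i, f (Z i ω) - r * T ω := by
        simp only [hS, hT, hh_def, Finset.sum_sub_distrib, ← Finset.mul_sum]
        ring
      rw [e]
      field_simp
    rw [integral_congr_ae (ae_of_all _ e2), integral_sub hfint (integrable_const r),
      integral_const]
    simp
  -- decomposition using E[S] = 0
  have hdec : ∫ ω, S ω / T ω ∂P = (∫ ω, (S ω / T ω) * (m - T ω) ∂P) / m := by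
    have hpt : ∀ ω : Ω, S ω / T ω = (S ω / T ω) * (m - T ω) / m + S ω / m := fun ω => by
      have h1 := (hT0 ω).ne'
      field_simp
      ring
    calc ∫ ω, S ω / T ω ∂P = ∫ ω, ((S ω / T ω) * (m - T ω) / m + S ω / m) ∂P :=
        integral_congr_ae (ae_of_all _ hpt)
    _ = ∫ ω, (S ω / T ω) * (m - T ω) / m ∂P + ∫ ω, S ω / m ∂P :=
        integral_add (hUVint.div_const m) (hSint.div_const m)
    _ = (∫ ω, (S ω / T ω) * (m - T ω) ∂P) / m := by
        rw [integral_div, integral_div, hPS]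
        simp
  rw [hLHS, hdec, abs_div, abs_of_pos hm0, div_le_iff₀ hm0]
  -- main estimate
  rcases eq_or_lt_of_le ha0 with haz | hapos
  · -- degenerate case a = 0
    have hS0 : ∀ ω, S ω = 0 := fun ω => by
      have h1 := hSb ω
      rw [← haz, zero_mul] at h1
      exact abs_eq_zero.mp (le_antisymm h1 (abs_nonneg _))
    have : ∫ ω, (S ω / T ω) * (m - T ω) ∂P = 0 := by
      have : ∀ ω : Ω, (S ω / T ω) * (m - T ω) = 0 := fun ω => by
        rw [hS0 ω, zero_div, zero_mul]
      rw [integral_congr_ae (ae_of_all _ this), integral_zero]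
    rw [this, abs_zero, ← haz]
    positivity
  · set t := m / (a * b) with ht
    have ht0 : 0 < t := div_pos hm0 (mul_pos hapos hb0)
    have hptAM : ∀ ω : Ω, |(S ω / T ω) * (m - T ω)|
        ≤ (t * (S ω / T ω) ^ 2 + (T ω - m) ^ 2 / t) / 2 := by
      intro ω
      have h3 : (S ω / T ω) ^ 2 = |S ω / T ω| ^ 2 := (sq_abs _).symm
      have h4 : (T ω - m) ^ 2 = |m - T ω| ^ 2 := by
        rw [← sq_abs (T ω - m), abs_sub_comm]
      have key : |(S ω / T ω) * (m - T ω)| * (2 * t)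
          ≤ (t * (S ω / T ω) ^ 2 + (T ω - m) ^ 2 / t) / 2 * (2 * t) := by
        have e : (t * (S ω / T ω) ^ 2 + (T ω - m) ^ 2 / t) / 2 * (2 * t)
            = t ^ 2 * (S ω / T ω) ^ 2 + (T ω - m) ^ 2 := by
          field_simp
        rw [e, abs_mul, h3, h4]
        nlinarith [sq_nonneg (t * |S ω / T ω| - |m - T ω|)]
      exact (mul_le_mul_iff_of_pos_right (by positivity : (0 : ℝ) < 2 * t)).mp key
    have hIUV : |∫ ω, (S ω / T ω) * (m - T ω) ∂P| ≤ a * b ^ 2 * m / k := by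
      have step1 : |∫ ω, (S ω / T ω) * (m - T ω) ∂P|
          ≤ ∫ ω, |(S ω / T ω) * (m - T ω)| ∂P := by
        simpa only [Real.norm_eq_abs] using
          norm_integral_le_integral_norm (μ := P) (fun ω => (S ω / T ω) * (m - T ω))
      have step2 : ∫ ω, |(S ω / T ω) * (m - T ω)| ∂P
          ≤ ∫ ω, (t * (S ω / T ω) ^ 2 + (T ω - m) ^ 2 / t) / 2 ∂P :=
        integral_mono hUVint.abs
          (((hU2int.const_mul t).add (hV2int.div_const t)).div_const 2) hptAM
      have step3 : ∫ ω, (t * (S ω / T ω) ^ 2 + (T ω - m) ^ 2 / t) / 2 ∂P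
          = (t * ∫ ω, (S ω / T ω) ^ 2 ∂P + (∫ ω, (T ω - m) ^ 2 ∂P) / t) / 2 := by
        rw [integral_div, integral_add (hU2int.const_mul t) (hV2int.div_const t),
          integral_const_mul, integral_div]
      have e1 : t * (a ^ 2 * b ^ 3 / k) = a * b ^ 2 * m / k := by
        rw [ht]
        field_simp
      have e2 : (b * m ^ 2 / k) / t = a * b ^ 2 * m / k := by
        rw [ht]
        field_simp
      have b1 : t * ∫ ω, (S ω / T ω) ^ 2 ∂P ≤ a * b ^ 2 * m / k := by
        rw [← e1]
        exact mul_le_mul_of_nonneg_left hintU2 ht0.le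
      have b2 : (∫ ω, (T ω - m) ^ 2 ∂P) / t ≤ a * b ^ 2 * m / k := by
        rw [← e2]
        exact (div_le_div_iff_of_pos_right ht0).mpr hintTm
      calc |∫ ω, (S ω / T ω) * (m - T ω) ∂P|
          ≤ (t * ∫ ω, (S ω / T ω) ^ 2 ∂P + (∫ ω, (T ω - m) ^ 2 ∂P) / t) / 2 := by
            rw [← step3]
            exact le_trans step1 step2
      _ ≤ a * b ^ 2 * m / k := by linarith
    have hfinal : a * b ^ 2 * m / k ≤ 2 * a * b ^ 2 / k * m := by
      have h0 : 0 ≤ a * b ^ 2 * m / k := by positivity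
      have e : 2 * a * b ^ 2 / k * m = 2 * (a * b ^ 2 * m / k) := by ring
      rw [e]
      linarith
    exact le_trans hIUV hfinal
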